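/- Let E = [[√6/6, −√2/2], [√6/6, √2/2]] ∈ ℝ^{2×2} and v = [−√6/3, 0] ∈ ℝ^{1×2}. For even m ≥ 2, let X̃_m ∈ ℝ^{(3m/2)×m} be the block matrix with m/2 diagonal copies of E stacked above m/2 diagonal copies of v. Then X̃_mᵀ X̃_m = I_m (the m×m identity) and every column of X̃_m sums to zero. -/

import Mathlib

open Matrix Finset

/-- The matrix `X̃_m` for even `m = 2k`: `k` diagonal blocks of
`E = [[√6/6, −√2/2], [√6/6, √2/2]]` (rows `0,…,2k−1`) stacked above `k`
diagonal blocks of `v = [−√6/3, 0]` (rows `2k,…,3k−1`). -/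
noncomputable def XtildeEven (k : ℕ) : Matrix (Fin (3 * k)) (Fin (2 * k)) ℝ :=
  Matrix.of fun i j =>
    if (i : ℕ) < 2 * k then
      -- E blocks
      if (j : ℕ) / 2 = (i : ℕ) / 2 then
        if (j : ℕ) % 2 = 0 then Real.sqrt 6 / 6
        else if (i : ℕ) % 2 = 0 then -(Real.sqrt 2 / 2) else Real.sqrt 2 / 2
      else 0
    else
      -- v blocks
      if (j : ℕ) = 2 * ((i : ℕ) - 2 * k) then -(Real.sqrt 6 / 3) else 0

lemma sum_range_two_mul {M : Type*} [AddCommMonoid M] (k : ℕ) (f : ℕ → M) :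
    ∑ i ∈ Finset.range (2 * k), f i
      = ∑ p ∈ Finset.range k, (f (2 * p) + f (2 * p + 1)) := by
  induction k with
  | zero => simp
  | succ n ih =>
    have h : 2 * (n + 1) = (2 * n + 1) + 1 := by ring
    rw [h, Finset.sum_range_succ, Finset.sum_range_succ, ih, Finset.sum_range_succ,
      add_assoc]

lemma sum_fin_split (k : ℕ) (f : ℕ → ℝ) :
    ∑ i ∈ Finset.range (3 * k), f i
      = ∑ p ∈ Finset.range k, (f (2 * p) + f (2 * p + 1) + f (2 * k + p)) := by
  have h1 : ∑ i ∈ Finset.range (3 * k), f i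
      = ∑ i ∈ Finset.range (2 * k), f i + ∑ i ∈ Finset.range k, f (2 * k + i) := by
    have h3 : 3 * k = 2 * k + k := by ring
    rw [h3, Finset.range_eq_Ico,
      ← Finset.sum_Ico_consecutive f (Nat.zero_le (2 * k)) (Nat.le_add_right (2*k) k)]
    congr 1
    · simp
    rw [Finset.sum_Ico_eq_sum_range]
    simp only [Nat.add_sub_cancel_left]
  rw [h1, sum_range_two_mul, ← Finset.sum_add_distrib]

lemma sum_split_fin (k : ℕ) (g : Fin (3 * k) → ℝ) :
    ∑ i : Fin (3 * k), g i
      = ∑ p ∈ Finset.range k,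
          ((if h : 2 * p < 3 * k then g ⟨2 * p, h⟩ else 0)
            + (if h : 2 * p + 1 < 3 * k then g ⟨2 * p + 1, h⟩ else 0)
            + (if h : 2 * k + p < 3 * k then g ⟨2 * k + p, h⟩ else 0)) := by
  set F : ℕ → ℝ := fun n => if h : n < 3 * k then g ⟨n, h⟩ else 0 with hF
  have h1 : ∑ i : Fin (3 * k), g i = ∑ n ∈ Finset.range (3 * k), F n := by
    rw [← Fin.sum_univ_eq_sum_range F (3 * k)]
    apply Finset.sum_congr rfl
    intro i _
    simp [hF, i.2]
  rw [h1, sum_fin_split]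


lemma entryE0 (k p : ℕ) (hp : p < k) (h : 2 * p < 3 * k) (j : Fin (2 * k)) :
    XtildeEven k ⟨2 * p, h⟩ j
      = if (j : ℕ) / 2 = p then
          (if (j : ℕ) % 2 = 0 then Real.sqrt 6 / 6 else -(Real.sqrt 2 / 2)) else 0 := by
  have h1 : 2 * p < 2 * k := by omega
  have h2 : 2 * p / 2 = p := by omega
  have h3 : 2 * p % 2 = 0 := by omega
  simp only [XtildeEven, Matrix.of_apply, h1, h2, h3, if_true, if_pos]

lemma entryE1 (k p : ℕ) (hp : p < k) (h : 2 * p + 1 < 3 * k) (j : Fin (2 * k)) :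
    XtildeEven k ⟨2 * p + 1, h⟩ j
      = if (j : ℕ) / 2 = p then
          (if (j : ℕ) % 2 = 0 then Real.sqrt 6 / 6 else Real.sqrt 2 / 2) else 0 := by
  have h1 : 2 * p + 1 < 2 * k := by omega
  have h2 : (2 * p + 1) / 2 = p := by omega
  have h3 : ¬ ((2 * p + 1) % 2 = 0) := by omega
  simp only [XtildeEven, Matrix.of_apply, h1, h2, h3, if_true, if_false, if_pos]

lemma entryV (k p : ℕ) (hp : p < k) (h : 2 * k + p < 3 * k) (j : Fin (2 * k)) :
    XtildeEven k ⟨2 * k + p, h⟩ j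
      = if (j : ℕ) = 2 * p then -(Real.sqrt 6 / 3) else 0 := by
  have h1 : ¬ (2 * k + p < 2 * k) := by omega
  have h2 : 2 * k + p - 2 * k = p := by omega
  simp only [XtildeEven, Matrix.of_apply, h1, h2, if_false]

/-- For even `m = 2k ≥ 2`, `X̃_mᵀ X̃_m = I_m` and every column of `X̃_m`
sums to zero. -/
theorem XtildeEven_orthonormal_centered (k : ℕ) (hk : 1 ≤ k) :
    (XtildeEven k)ᵀ * XtildeEven k = 1 ∧
      ∀ j : Fin (2 * k), ∑ i : Fin (3 * k), XtildeEven k i j = 0 := by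
  have s6 : Real.sqrt 6 * Real.sqrt 6 = 6 := Real.mul_self_sqrt (by norm_num)
  have s2 : Real.sqrt 2 * Real.sqrt 2 = 2 := Real.mul_self_sqrt (by norm_num)
  constructor
  · ext j j'
    rw [Matrix.mul_apply]
    simp only [Matrix.transpose_apply]
    rw [sum_split_fin k (fun i => XtildeEven k i j * XtildeEven k i j')]
    have hq : (j : ℕ) / 2 < k := by have := j.2; omega
    by_cases hjj : j = j'
    · subst hjj
      have hstep : ∀ p ∈ Finset.range k,
          ((if h : 2 * p < 3 * k then XtildeEven k ⟨2 * p, h⟩ j * XtildeEven k ⟨2 * p, h⟩ j else 0)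
            + (if h : 2 * p + 1 < 3 * k then XtildeEven k ⟨2 * p + 1, h⟩ j * XtildeEven k ⟨2 * p + 1, h⟩ j else 0)
            + (if h : 2 * k + p < 3 * k then XtildeEven k ⟨2 * k + p, h⟩ j * XtildeEven k ⟨2 * k + p, h⟩ j else 0))
          = if (j : ℕ) / 2 = p then 1 else 0 := by
        intro p hp
        rw [Finset.mem_range] at hp
        have hb0 : 2 * p < 3 * k := by omega
        have hb1 : 2 * p + 1 < 3 * k := by omega
        have hb2 : 2 * k + p < 3 * k := by omega
        rw [dif_pos hb0, dif_pos hb1, dif_pos hb2, entryE0 k p hp, entryE1 k p hp,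
          entryV k p hp]
        by_cases hpq : (j : ℕ) / 2 = p
        · by_cases hr : (j : ℕ) % 2 = 0
          · have hv : (j : ℕ) = 2 * p := by omega
            simp only [if_pos hpq, if_pos hr, if_pos hv]
            nlinarith [s6]
          · have hv : ¬ ((j : ℕ) = 2 * p) := by omega
            simp only [if_pos hpq, if_neg hr, if_neg hv]
            nlinarith [s2]
        · have hv : ¬ ((j : ℕ) = 2 * p) := by omega
          simp [hpq, hv]
      rw [Finset.sum_congr rfl hstep, Finset.sum_ite_eq (Finset.range k) ((j : ℕ) / 2)
        (fun _ => (1 : ℝ)), if_pos (Finset.mem_range.mpr hq)]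
      simp [Matrix.one_apply]
    · have hne : (j : ℕ) ≠ (j' : ℕ) := fun h => hjj (Fin.ext h)
      have hzero : ∀ p ∈ Finset.range k,
          ((if h : 2 * p < 3 * k then XtildeEven k ⟨2 * p, h⟩ j * XtildeEven k ⟨2 * p, h⟩ j' else 0)
            + (if h : 2 * p + 1 < 3 * k then XtildeEven k ⟨2 * p + 1, h⟩ j * XtildeEven k ⟨2 * p + 1, h⟩ j' else 0)
            + (if h : 2 * k + p < 3 * k then XtildeEven k ⟨2 * k + p, h⟩ j * XtildeEven k ⟨2 * k + p, h⟩ j' else 0))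
          = 0 := by
        intro p hp
        rw [Finset.mem_range] at hp
        have hb0 : 2 * p < 3 * k := by omega
        have hb1 : 2 * p + 1 < 3 * k := by omega
        have hb2 : 2 * k + p < 3 * k := by omega
        rw [dif_pos hb0, dif_pos hb1, dif_pos hb2, entryE0 k p hp, entryE1 k p hp,
          entryE0 k p hp, entryE1 k p hp, entryV k p hp, entryV k p hp]
        by_cases hpq : (j : ℕ) / 2 = p <;> by_cases hpq' : (j' : ℕ) / 2 = p
        · -- same block, different parity
          have hrr : (j : ℕ) % 2 ≠ (j' : ℕ) % 2 := by omega
          by_cases hr : (j : ℕ) % 2 = 0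
          · have hr' : ¬ ((j' : ℕ) % 2 = 0) := by omega
            have hv' : ¬ ((j' : ℕ) = 2 * p) := by omega
            simp only [if_pos hpq, if_pos hpq', if_pos hr, if_neg hr', if_neg hv', mul_zero]
            ring
          · have hr' : (j' : ℕ) % 2 = 0 := by omega
            have hv : ¬ ((j : ℕ) = 2 * p) := by omega
            simp only [if_pos hpq, if_pos hpq', if_neg hr, if_pos hr', if_neg hv, zero_mul]
            ring
        · have hv' : ¬ ((j' : ℕ) = 2 * p) := by omega
          simp [hpq', hv']
        · have hv : ¬ ((j : ℕ) = 2 * p) := by omega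
          simp [hpq, hv]
        · have hv : ¬ ((j : ℕ) = 2 * p) := by omega
          simp [hpq, hv]
      rw [Finset.sum_eq_zero hzero]
      simp [Matrix.one_apply, hjj]
  · intro j
    rw [sum_split_fin k (fun i => XtildeEven k i j)]
    apply Finset.sum_eq_zero
    intro p hp
    rw [Finset.mem_range] at hp
    have hb0 : 2 * p < 3 * k := by omega
    have hb1 : 2 * p + 1 < 3 * k := by omega
    have hb2 : 2 * k + p < 3 * k := by omega
    rw [dif_pos hb0, dif_pos hb1, dif_pos hb2, entryE0 k p hp, entryE1 k p hp,
      entryV k p hp]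
    by_cases hpq : (j : ℕ) / 2 = p
    · by_cases hr : (j : ℕ) % 2 = 0
      · have hv : (j : ℕ) = 2 * p := by omega
        simp only [if_pos hpq, if_pos hr, if_pos hv]
        ring
      · have hv : ¬ ((j : ℕ) = 2 * p) := by omega
        simp only [if_pos hpq, if_neg hr, if_neg hv]
        ring
    · have hv : ¬ ((j : ℕ) = 2 * p) := by omega
      simp [hpq, hv]
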